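/- Let G = (V, E) be a directed graph with independence number α and strictly positive vertex weights p_i > 0. Then there exists a vertex i ∈ V such that p_i / (p_i + Σ_{j : (j,i) ∈ E} p_j) ≤ 2·p_i·α / (Σ_i p_i). Equivalently, after normalizing so that p ∈ Δ(V): min over i of (p_i + Σ_{j:(j,i)∈E} p_j) ≥ 1/(2α). -/

import Mathlib

open Finset

lemma cw_aux {V : Type*} [Fintype V] [DecidableEq V]
    (adj : V → V → Prop) [DecidableRel adj] (hsym : ∀ i j, adj i j → adj j i)
    (q : V → ℝ) (hq : ∀ i, 0 < q i) :
    ∀ (T : Finset V) (a : ℕ),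
      (∀ S ⊆ T, (∀ i ∈ S, ∀ j ∈ S, i ≠ j → ¬ adj i j) → S.card ≤ a) →
      ∑ i ∈ T, q i / (∑ j ∈ T.filter (fun j => j = i ∨ adj i j), q j) ≤ a := by
  intro T
  induction T using Finset.strongInduction with
  | _ T ih =>
    intro a ha
    rcases T.eq_empty_or_nonempty with rfl | hT
    · simp
    have hspos : ∀ U : Finset V, ∀ i ∈ U,
        0 < ∑ j ∈ U.filter (fun j => j = i ∨ adj i j), q j := by
      intro U i hi
      apply Finset.sum_pos (fun j _ => hq j)
      exact ⟨i, Finset.mem_filter.2 ⟨hi, Or.inl rfl⟩⟩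
    obtain ⟨v, hvT, hmin⟩ := T.exists_min_image
      (fun i => ∑ j ∈ T.filter (fun j => j = i ∨ adj i j), q j) hT
    have ha1 : 1 ≤ a := by
      have := ha {v} (by simpa using hvT) (by simp)
      simpa using this
    have hsplit := (Finset.sum_filter_add_sum_filter_not T (fun j => j = v ∨ adj v j)
        (fun i => q i / (∑ j ∈ T.filter (fun j => j = i ∨ adj i j), q j))).symm
    set T' := T.filter (fun j => ¬ (j = v ∨ adj v j)) with hT'def
    have hT'sub : T' ⊂ T := Finset.filter_ssubset.2 ⟨v, hvT, by simp⟩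
    -- bound on the closed neighborhood of v
    have h1 : ∑ i ∈ T.filter (fun j => j = v ∨ adj v j),
        q i / (∑ j ∈ T.filter (fun j => j = i ∨ adj i j), q j) ≤ 1 := by
      have hstep : ∑ i ∈ T.filter (fun j => j = v ∨ adj v j),
          q i / (∑ j ∈ T.filter (fun j => j = i ∨ adj i j), q j)
          ≤ ∑ i ∈ T.filter (fun j => j = v ∨ adj v j),
          q i / (∑ j ∈ T.filter (fun j => j = v ∨ adj v j), q j) := by
        refine Finset.sum_le_sum fun i hi => ?_
        have hiT : i ∈ T := (Finset.mem_filter.1 hi).1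
        exact div_le_div_of_nonneg_left (hq i).le (hspos T v hvT) (hmin i hiT)
      have : ∑ i ∈ T.filter (fun j => j = v ∨ adj v j),
          q i / (∑ j ∈ T.filter (fun j => j = v ∨ adj v j), q j) = 1 := by
        rw [← Finset.sum_div, div_self (hspos T v hvT).ne']
      linarith
    -- bound on the rest
    have h2 : ∑ i ∈ T', q i / (∑ j ∈ T.filter (fun j => j = i ∨ adj i j), q j)
        ≤ ∑ i ∈ T', q i / (∑ j ∈ T'.filter (fun j => j = i ∨ adj i j), q j) := by
      refine Finset.sum_le_sum fun i hi => ?_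
      refine div_le_div_of_nonneg_left (hq i).le (hspos T' i hi) ?_
      refine Finset.sum_le_sum_of_subset_of_nonneg
        (Finset.filter_subset_filter _ (Finset.filter_subset _ _)) (fun j _ _ => (hq j).le)
    have h3 : ∑ i ∈ T', q i / (∑ j ∈ T'.filter (fun j => j = i ∨ adj i j), q j)
        ≤ ((a - 1 : ℕ) : ℝ) := by
      refine ih T' hT'sub (a - 1) ?_
      intro S hS hind
      have hvS : v ∉ S := fun hv => by
        have := hS hv
        rw [hT'def, Finset.mem_filter] at this
        exact this.2 (Or.inl rfl)
      have hcard : (insert v S).card = S.card + 1 := Finset.card_insert_of_notMem hvS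
      have hsub : insert v S ⊆ T :=
        Finset.insert_subset hvT (hS.trans (Finset.filter_subset _ _))
      have hindep : ∀ i ∈ insert v S, ∀ j ∈ insert v S, i ≠ j → ¬ adj i j := by
        intro i hi j hj hij
        rcases Finset.mem_insert.1 hi with hi' | hi' <;>
          rcases Finset.mem_insert.1 hj with hj' | hj'
        · exact absurd (hi'.trans hj'.symm) hij
        · subst hi'
          have := hS hj'; rw [hT'def, Finset.mem_filter] at this
          exact fun h => this.2 (Or.inr h)
        · subst hj'
          have := hS hi'; rw [hT'def, Finset.mem_filter] at this
          exact fun h => this.2 (Or.inr (hsym i j h))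
        · exact hind i hi' j hj' hij
      have := ha (insert v S) hsub hindep
      omega
    have hcast : ((a - 1 : ℕ) : ℝ) = (a : ℝ) - 1 := by
      have : ((a - 1 : ℕ) : ℝ) = ((a : ℕ) : ℝ) - ((1 : ℕ) : ℝ) := Nat.cast_sub ha1
      simpa using this
    rw [hsplit]
    rw [hcast] at h3
    linarith

lemma ite_split (A B C : Prop) [Decidable A] [Decidable B] [Decidable C] (x : ℝ)
    (hx : 0 ≤ x) :
    (if A ∨ B ∨ C then x else 0)
      ≤ (if A then x else 0) + (if C then x else 0) + (if B then x else 0) := by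
  split_ifs <;> simp_all <;> linarith

theorem refined_graph_sum {V : Type*} [Fintype V] [DecidableEq V] [Nonempty V]
    (E : V → V → Prop) [DecidableRel E] (αG : ℕ)
    (hub : ∀ S : Finset V,
      (∀ i ∈ S, ∀ j ∈ S, i ≠ j → ¬ E i j ∧ ¬ E j i) → S.card ≤ αG)
    (hach : ∃ S : Finset V,
      (∀ i ∈ S, ∀ j ∈ S, i ≠ j → ¬ E i j ∧ ¬ E j i) ∧ S.card = αG)
    (p : V → ℝ) (hp : ∀ i, 0 < p i) :
    ∃ i : V,
      p i / (p i + ∑ j ∈ Finset.univ.filter (fun j => E j i), p j)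
        ≤ 2 * p i * (αG : ℝ) / (∑ j, p j) := by
  have hsym : ∀ i j : V, (E i j ∨ E j i) → (E j i ∨ E i j) := fun i j h => h.symm
  set w : V → ℝ := fun i => ∑ j ∈ Finset.univ.filter (fun j => E j i), p j with hw
  set s : V → ℝ := fun i => ∑ j ∈ Finset.univ.filter (fun j => j = i ∨ E i j ∨ E j i), p j
    with hs
  have hwnn : ∀ i, 0 ≤ w i := fun i => Finset.sum_nonneg fun j _ => (hp j).le
  have hwpos : ∀ i, 0 < p i + w i := fun i => add_pos_of_pos_of_nonneg (hp i) (hwnn i)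
  have hP : 0 < ∑ j, p j := Finset.sum_pos (fun j _ => hp j) Finset.univ_nonempty
  have hα1 : 1 ≤ αG := by
    obtain ⟨v⟩ := ‹Nonempty V›
    have := hub {v} (by simp)
    simpa using this
  have hαR : (0:ℝ) < (αG : ℝ) := by exact_mod_cast Nat.lt_of_lt_of_le Nat.zero_lt_one hα1
  have hspos : ∀ i, 0 < s i := by
    intro i
    apply Finset.sum_pos (fun j _ => hp j)
    exact ⟨i, Finset.mem_filter.2 ⟨Finset.mem_univ i, Or.inl rfl⟩⟩
  -- Caro-Wei
  have hcw : ∑ i, p i / s i ≤ (αG : ℝ) := by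
    have := cw_aux (fun i j => E i j ∨ E j i) hsym p hp Finset.univ αG ?_
    · simpa [hs] using this
    · intro S _ hind
      refine hub S fun i hi j hj hij => ?_
      have h := hind i hi j hj hij
      have h' := hind j hj i hi hij.symm
      exact ⟨fun he => h (Or.inl he), fun he => h' (Or.inl he)⟩
  -- Cauchy-Schwarz : (∑ p)^2 ≤ (∑ p s)(∑ p / s)
  have hCS : (∑ j, p j) ^ 2 ≤ (∑ i, p i * s i) * (∑ i, p i / s i) := by
    have := Finset.sum_mul_sq_le_sq_mul_sq Finset.univ
      (fun i => Real.sqrt (p i * s i)) (fun i => Real.sqrt (p i / s i))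
    have heq : ∀ i : V, Real.sqrt (p i * s i) * Real.sqrt (p i / s i) = p i := by
      intro i
      rw [← Real.sqrt_mul (mul_nonneg (hp i).le (hspos i).le)]
      have : p i * s i * (p i / s i) = p i ^ 2 := by
        field_simp [(hspos i).ne']
      rw [this, Real.sqrt_sq (hp i).le]
    have h1 : ∀ i : V, Real.sqrt (p i * s i) ^ 2 = p i * s i := fun i =>
      Real.sq_sqrt (mul_nonneg (hp i).le (hspos i).le)
    have h2 : ∀ i : V, Real.sqrt (p i / s i) ^ 2 = p i / s i := fun i =>
      Real.sq_sqrt (div_nonneg (hp i).le (hspos i).le)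
    simp only [heq, h1, h2] at this
    exact this
  have hps_nonneg : 0 ≤ ∑ i, p i * s i :=
    Finset.sum_nonneg fun i _ => mul_nonneg (hp i).le (hspos i).le
  have hkey1 : (∑ j, p j) ^ 2 ≤ (∑ i, p i * s i) * (αG : ℝ) :=
    hCS.trans (mul_le_mul_of_nonneg_left hcw hps_nonneg)
  -- ∑ p s ≤ 2 ∑ p (p + w)
  have hbound : ∑ i, p i * s i ≤ 2 * ∑ i, p i * (p i + w i) := by
    have hout : ∀ i : V, s i ≤ p i + w i + ∑ j ∈ Finset.univ.filter (fun j => E i j), p j := by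
      intro i
      have e1 : s i = ∑ j, (if j = i ∨ E i j ∨ E j i then p j else 0) := by
        simp [hs, Finset.sum_filter]
      have e2 : w i = ∑ j, (if E j i then p j else 0) := by
        simp [hw, Finset.sum_filter]
      have e3 : p i = ∑ j, (if j = i then p j else 0) := by
        rw [Finset.sum_ite_eq' Finset.univ i p]; simp
      have e4 : (∑ j ∈ Finset.univ.filter (fun j => E i j), p j)
          = ∑ j, (if E i j then p j else 0) := by rw [Finset.sum_filter]
      rw [e1, e2, e4]
      nth_rewrite 1 [e3]
      rw [← Finset.sum_add_distrib, ← Finset.sum_add_distrib]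
      exact Finset.sum_le_sum fun j _ => ite_split (j = i) (E i j) (E j i) (p j) (hp j).le
    have hswap : ∑ i, p i * (∑ j ∈ Finset.univ.filter (fun j => E i j), p j)
        = ∑ i, p i * w i := by
      simp only [hw, Finset.sum_filter, Finset.mul_sum, mul_ite, mul_zero]
      rw [Finset.sum_comm]
      congr 1; ext i; congr 1; ext j
      by_cases h : E j i <;> simp [h, mul_comm]
    calc ∑ i, p i * s i
        ≤ ∑ i, p i * (p i + w i + ∑ j ∈ Finset.univ.filter (fun j => E i j), p j) :=
          Finset.sum_le_sum fun i _ => mul_le_mul_of_nonneg_left (hout i) (hp i).le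
      _ = ∑ i, p i * (p i + w i) + ∑ i, p i * (∑ j ∈ Finset.univ.filter (fun j => E i j), p j) := by
          rw [← Finset.sum_add_distrib]; congr 1; ext i; ring
      _ = ∑ i, p i * (p i + w i) + ∑ i, p i * w i := by rw [hswap]
      _ ≤ 2 * ∑ i, p i * (p i + w i) := by
          have : ∑ i, p i * w i ≤ ∑ i, p i * (p i + w i) :=
            Finset.sum_le_sum fun i _ => by nlinarith [sq_nonneg (p i)]
          linarith
  -- conclude
  by_contra hcon
  push_neg at hcon
  have hlt : ∀ i : V, p i + w i < (∑ j, p j) / (2 * αG) := by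
    intro i
    have h := hcon i
    rw [div_lt_div_iff₀ hP (hwpos i)] at h
    rw [lt_div_iff₀ (by positivity)]
    nlinarith [hp i]
  have hsum_lt : ∑ i, p i * (p i + w i) < ∑ i, p i * ((∑ j, p j) / (2 * αG)) := by
    apply Finset.sum_lt_sum_of_nonempty Finset.univ_nonempty
    intro i _
    exact mul_lt_mul_of_pos_left (hlt i) (hp i)
  have heq2 : ∑ i, p i * ((∑ j, p j) / (2 * αG)) = (∑ j, p j) ^ 2 / (2 * αG) := by
    rw [← Finset.sum_mul]; ring
  rw [heq2, lt_div_iff₀ (by positivity)] at hsum_lt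
  nlinarith
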